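/- Let (U,V) be uniform with density 2 on S = (0,1/2)×(0,1/4) ∪ (0,1/2)×(3/4,1) ∪ (1/2,1)×(1/4,3/4), and set X = U, Z = V². Then E(X) = 1/2, E(Z) = 1/3, E(XZ) = 29/192, and Cov(X,Z) = -1/64 < 0. -/

import Mathlib

set_option maxHeartbeats 1000000


open MeasureTheory Set

/-- The support set `S` of Example 2. -/
def exSupport : Set (ℝ × ℝ) :=
  (Ioo (0:ℝ) (1/2) ×ˢ Ioo (0:ℝ) (1/4)) ∪
  (Ioo (0:ℝ) (1/2) ×ˢ Ioo (3/4:ℝ) 1) ∪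
  (Ioo (1/2:ℝ) 1 ×ˢ Ioo (1/4:ℝ) (3/4))

/-- The uniform measure with density `2` on `S`. -/
noncomputable def exMeasure : Measure (ℝ × ℝ) :=
  (2 : ENNReal) • (volume.restrict exSupport)

lemma exIntegrableOn (f : ℝ × ℝ → ℝ) (hf : Continuous f)
    (a b c d : ℝ) (h : Ioo a b ×ˢ Ioo c d ⊆ Icc (0:ℝ) 1 ×ˢ Icc (0:ℝ) 1) :
    IntegrableOn f (Ioo a b ×ˢ Ioo c d) := by
  exact (hf.continuousOn.integrableOn_compact (isCompact_Icc.prod isCompact_Icc)).mono_set h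

lemma exKey (f g : ℝ → ℝ) (hf : Continuous f) (hg : Continuous g) :
    ∫ p : ℝ × ℝ, f p.1 * g p.2 ∂exMeasure =
      2 * ((∫ x in Ioo (0:ℝ) (1/2), f x) * (∫ y in Ioo (0:ℝ) (1/4), g y)
        + (∫ x in Ioo (0:ℝ) (1/2), f x) * (∫ y in Ioo (3/4:ℝ) 1, g y)
        + (∫ x in Ioo (1/2:ℝ) 1, f x) * (∫ y in Ioo (1/4:ℝ) (3/4), g y)) := by
  have hcont : Continuous fun p : ℝ × ℝ => f p.1 * g p.2 :=
    (hf.comp continuous_fst).mul (hg.comp continuous_snd)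
  have hd1 : Disjoint ((Ioo (0:ℝ) (1/2) ×ˢ Ioo (0:ℝ) (1/4)) ∪
      (Ioo (0:ℝ) (1/2) ×ˢ Ioo (3/4:ℝ) 1)) (Ioo (1/2:ℝ) 1 ×ˢ Ioo (1/4:ℝ) (3/4)) := by
    rw [Set.disjoint_left]
    rintro ⟨x, y⟩ (⟨hx, hy⟩ | ⟨hx, hy⟩) ⟨hx', hy'⟩ <;>
      simp only [mem_Ioo] at * <;> linarith [hx.2, hx'.1]
  have hd2 : Disjoint (Ioo (0:ℝ) (1/2) ×ˢ Ioo (0:ℝ) (1/4))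
      (Ioo (0:ℝ) (1/2) ×ˢ Ioo (3/4:ℝ) 1) := by
    rw [Set.disjoint_left]
    rintro ⟨x, y⟩ ⟨hx, hy⟩ ⟨hx', hy'⟩
    simp only [mem_Ioo] at *
    linarith [hy.2, hy'.1]
  have hm : ∀ a b c d : ℝ, MeasurableSet (Ioo a b ×ˢ Ioo c d) := fun a b c d =>
    measurableSet_Ioo.prod measurableSet_Ioo
  have hsub : ∀ a b c d : ℝ, 0 ≤ a → b ≤ 1 → 0 ≤ c → d ≤ 1 →
      Ioo a b ×ˢ Ioo c d ⊆ Icc (0:ℝ) 1 ×ˢ Icc (0:ℝ) 1 := by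
    rintro a b c d ha hb hc hd ⟨x, y⟩ ⟨hx, hy⟩
    simp only [mem_Ioo] at hx hy
    exact ⟨⟨by linarith [hx.1], by linarith [hx.2]⟩, ⟨by linarith [hy.1], by linarith [hy.2]⟩⟩
  have hi1 := exIntegrableOn _ hcont 0 (1/2) 0 (1/4) (hsub _ _ _ _ le_rfl (by norm_num) le_rfl (by norm_num))
  have hi2 := exIntegrableOn _ hcont 0 (1/2) (3/4) 1 (hsub _ _ _ _ le_rfl (by norm_num) (by norm_num) le_rfl)
  have hi3 := exIntegrableOn _ hcont (1/2) 1 (1/4) (3/4) (hsub _ _ _ _ (by norm_num) le_rfl (by norm_num) (by norm_num))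
  rw [exMeasure, integral_smul_measure, exSupport]
  rw [setIntegral_union hd1 (hm _ _ _ _) (hi1.union hi2) hi3]
  rw [setIntegral_union hd2 (hm _ _ _ _) hi1 hi2]
  have hp : ∀ a b c d : ℝ,
      (∫ p : ℝ × ℝ, f p.1 * g p.2 ∂volume.restrict (Ioo a b ×ˢ Ioo c d)) =
        (∫ x in Ioo a b, f x) * (∫ y in Ioo c d, g y) := by
    intro a b c d
    rw [Measure.volume_eq_prod]
    exact setIntegral_prod_mul f g _ _
  rw [hp, hp, hp]
  norm_num

lemma exInt_id (a b : ℝ) (hab : a ≤ b) : (∫ x in Ioo a b, x) = (b^2 - a^2) / 2 := by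
  rw [setIntegral_congr_set Ioo_ae_eq_Ioc, ← intervalIntegral.integral_of_le hab,
    integral_id]

lemma exInt_one (a b : ℝ) (hab : a ≤ b) : (∫ _x in Ioo a b, (1:ℝ)) = b - a := by
  simp [Real.volume_Ioo, ENNReal.toReal_ofReal (by linarith : (0:ℝ) ≤ b - a), hab]

lemma exInt_sq (a b : ℝ) (hab : a ≤ b) : (∫ x in Ioo a b, x^2) = (b^3 - a^3) / 3 := by
  rw [setIntegral_congr_set Ioo_ae_eq_Ioc, ← intervalIntegral.integral_of_le hab,
    integral_pow]
  ring

/-- For `(U,V)` uniform (density 2) on `S`, with `X = U` and `Z = V²`: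
`E(X) = 1/2`, `E(Z) = 1/3`, `E(XZ) = 29/192`, and `Cov(X,Z) = -1/64 < 0`. -/
theorem stmt18 :
    (∫ p : ℝ × ℝ, p.1 ∂exMeasure) = 1/2 ∧
    (∫ p : ℝ × ℝ, (p.2)^2 ∂exMeasure) = 1/3 ∧
    (∫ p : ℝ × ℝ, p.1 * (p.2)^2 ∂exMeasure) = 29/192 ∧
    (∫ p : ℝ × ℝ, p.1 * (p.2)^2 ∂exMeasure) -
      (∫ p : ℝ × ℝ, p.1 ∂exMeasure) * (∫ p : ℝ × ℝ, (p.2)^2 ∂exMeasure) = -(1/64) ∧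
    (-(1/64) : ℝ) < 0 := by
  have h1 : (∫ p : ℝ × ℝ, p.1 ∂exMeasure) = 1/2 := by
    have := exKey (fun x => x) (fun _ => 1) continuous_id continuous_const
    simp only [mul_one] at this
    rw [this, exInt_id _ _ (by norm_num), exInt_id _ _ (by norm_num),
      exInt_one _ _ (by norm_num), exInt_one _ _ (by norm_num), exInt_one _ _ (by norm_num)]
    norm_num
  have h2 : (∫ p : ℝ × ℝ, (p.2)^2 ∂exMeasure) = 1/3 := by
    have := exKey (fun _ => 1) (fun y => y^2) continuous_const (continuous_pow 2)
    simp only [one_mul] at this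
    rw [this, exInt_sq _ _ (by norm_num), exInt_sq _ _ (by norm_num),
      exInt_sq _ _ (by norm_num), exInt_one _ _ (by norm_num), exInt_one _ _ (by norm_num)]
    norm_num
  have h3 : (∫ p : ℝ × ℝ, p.1 * (p.2)^2 ∂exMeasure) = 29/192 := by
    have := exKey (fun x => x) (fun y => y^2) continuous_id (continuous_pow 2)
    rw [this, exInt_id _ _ (by norm_num), exInt_id _ _ (by norm_num),
      exInt_sq _ _ (by norm_num), exInt_sq _ _ (by norm_num), exInt_sq _ _ (by norm_num)]
    norm_num
  refine ⟨h1, h2, h3, ?_, by norm_num⟩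
  rw [h1, h2, h3]; norm_num
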